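/- arXiv:2407.05230 — 2 statements merged into one kernel-verified Lean document; each statement's English description precedes it below -/
import Mathlib

section
/- Let A be real symmetric with eigenvalues λ_1 ≥ ... ≥ λ_n, let p be fixed with δ_p = λ_p − λ_{p+1} > 0 and δ_p ≤ |λ_p|/4, and let r ≥ p be such that |x_0 − λ_i| ≥ |λ_p|/4 for all i > r, where x_0 = λ_p − δ_p/2. Then for z = x_0 + it, the spectral norm of Σ_{i>r} u_i u_iᵀ/(z − λ_i) is at most 1/√(t² + (λ_p/4)²), and consequently ∫_{-T}^{T} ‖(Σ_{i>r} u_i u_iᵀ/(z−λ_i)) E (Σ_{j>r} u_j u_jᵀ/(z−λ_j))‖ dt ≤ 16‖E‖/|λ_p| for any T ≥ |λ_p|/4. -/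
noncomputable def specNormC {n : ℕ} (M : Matrix (Fin n) (Fin n) ℂ) : ℝ :=
  ‖Matrix.toEuclideanCLM (𝕜 := ℂ) M‖

lemma my_norm_sum_sq {ι E : Type*} [NormedAddCommGroup E] [InnerProductSpace ℂ E]
    {v : ι → E} (hv : Orthonormal ℂ v) (s : Finset ι) (l : ι → ℂ) :
    ‖∑ i ∈ s, l i • v i‖ ^ 2 = ∑ i ∈ s, ‖l i‖ ^ 2 := by
  classical
  have h : (inner ℂ (∑ i ∈ s, l i • v i) (∑ i ∈ s, l i • v i) : ℂ)
      = ∑ i ∈ s, (starRingEnd ℂ (l i)) * l i := by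
    simp only [inner_sum, sum_inner, inner_smul_left, inner_smul_right, Finset.mul_sum]
    rw [Finset.sum_comm]
    refine Finset.sum_congr rfl fun i hi => ?_
    rw [Finset.sum_eq_single i]
    · rw [orthonormal_iff_ite.mp hv, if_pos rfl, mul_one]; ring
    · intro j hj hji
      rw [orthonormal_iff_ite.mp hv, if_neg (fun h => hji h.symm), mul_zero, mul_zero]
    · intro h; exact absurd hi h
  have h2 : (‖∑ i ∈ s, l i • v i‖ : ℝ) ^ 2
      = Complex.re (inner ℂ (∑ i ∈ s, l i • v i) (∑ i ∈ s, l i • v i) : ℂ) :=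
    @norm_sq_eq_re_inner ℂ _ _ _ _ _
  rw [h2, h, Complex.re_sum]
  refine Finset.sum_congr rfl fun i _ => ?_
  rw [Complex.mul_re]
  simp [Complex.sq_norm, Complex.normSq_apply]

lemma my_bessel_bound {ι E : Type*} [NormedAddCommGroup E] [InnerProductSpace ℂ E]
    {v : ι → E} (hv : Orthonormal ℂ v) (s : Finset ι) (c : ι → ℂ) (b : ℝ) (hb : 0 ≤ b)
    (hc : ∀ i ∈ s, ‖c i‖ ≤ b) (x : E) :
    ‖∑ i ∈ s, (c i * inner ℂ (v i) x) • v i‖ ≤ b * ‖x‖ := by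
  have h1 : ‖∑ i ∈ s, (c i * inner ℂ (v i) x) • v i‖ ^ 2 ≤ (b * ‖x‖) ^ 2 := by
    rw [my_norm_sum_sq hv]
    calc ∑ i ∈ s, ‖c i * inner ℂ (v i) x‖ ^ 2
        ≤ ∑ i ∈ s, b ^ 2 * ‖(inner ℂ (v i) x : ℂ)‖ ^ 2 := by
          refine Finset.sum_le_sum fun i hi => ?_
          rw [norm_mul, mul_pow]
          gcongr
          · exact hc i hi
      _ = b ^ 2 * ∑ i ∈ s, ‖(inner ℂ (v i) x : ℂ)‖ ^ 2 := by rw [Finset.mul_sum]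
      _ ≤ b ^ 2 * ‖x‖ ^ 2 := by gcongr; exact hv.sum_inner_products_le x
      _ = (b * ‖x‖) ^ 2 := by ring
  have := Real.sqrt_le_sqrt h1
  rwa [Real.sqrt_sq (norm_nonneg _), Real.sqrt_sq (by positivity)] at this

lemma tail_specNorm_le {n : ℕ} (u : Fin n → Fin n → ℝ)
    (hortho : ∀ i j, dotProduct (u i) (u j) = if i = j then (1:ℝ) else 0)
    (s : Finset (Fin n)) (c : Fin n → ℂ) (b : ℝ) (hb : 0 ≤ b)
    (hc : ∀ i ∈ s, ‖c i‖ ≤ b) :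
    specNormC (∑ i ∈ s, c i • (Matrix.vecMulVec (u i) (u i)).map Complex.ofReal) ≤ b := by
  classical
  set v : Fin n → EuclideanSpace ℂ (Fin n) :=
    fun i => (WithLp.equiv 2 (Fin n → ℂ)).symm (fun k => (u i k : ℂ)) with hvdef
  have hv : Orthonormal ℂ v := by
    rw [orthonormal_iff_ite]
    intro i j
    have : (inner ℂ (v i) (v j) : ℂ) = ((dotProduct (u i) (u j) : ℝ) : ℂ) := by
      simp only [hvdef, PiLp.inner_apply, WithLp.equiv_symm_apply, RCLike.inner_apply,
        Complex.conj_ofReal, dotProduct]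
      push_cast
      ring_nf
      exact Finset.sum_congr rfl fun _ _ => mul_comm _ _
    rw [this, hortho i j]
    split <;> simp
  refine ContinuousLinearMap.opNorm_le_bound _ hb fun x => ?_
  have happ : (Matrix.toEuclideanCLM (𝕜 := ℂ)
        (∑ i ∈ s, c i • (Matrix.vecMulVec (u i) (u i)).map Complex.ofReal)) x
      = ∑ i ∈ s, (c i * inner ℂ (v i) x) • v i := by
    have hsum : ∀ (l : Fin n → ℂ),
        ∑ i ∈ s, l i • v i
          = (WithLp.equiv 2 (Fin n → ℂ)).symm (∑ i ∈ s, l i • (fun k => (u i k : ℂ))) := by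
      intro l
      simp only [hvdef, WithLp.equiv_symm_apply, WithLp.toLp_sum, WithLp.toLp_smul]
    rw [hsum]
    apply (WithLp.equiv 2 (Fin n → ℂ)).injective
    simp only [WithLp.equiv_apply, WithLp.equiv_symm_apply, Matrix.ofLp_toEuclideanCLM, WithLp.ofLp_toLp]
    funext k
    simp only [hvdef, Matrix.toLin'_apply, Matrix.mulVec, dotProduct, Matrix.sum_apply,
      Matrix.smul_apply, Matrix.map_apply, Matrix.vecMulVec_apply, PiLp.inner_apply,
      Complex.conj_ofReal, WithLp.equiv_symm_apply, PiLp.toLp_apply,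
      Finset.sum_apply, Pi.smul_apply, smul_eq_mul, Finset.sum_mul, Finset.mul_sum,
      RCLike.inner_apply]
    rw [Finset.sum_comm]
    exact Finset.sum_congr rfl fun i hi => Finset.sum_congr rfl fun j hj => by push_cast; ring
  rw [happ]
  exact my_bessel_bound hv s c b hb hc x

lemma specNormC_mul_le {n : ℕ} (M N : Matrix (Fin n) (Fin n) ℂ) :
    specNormC (M * N) ≤ specNormC M * specNormC N := by
  unfold specNormC; rw [map_mul]
  exact norm_mul_le _ _

lemma complex_norm_shift (x₀ t l : ℝ) :
    ‖((x₀ : ℂ) + t * Complex.I) - (l : ℂ)‖ = Real.sqrt ((x₀ - l) ^ 2 + t ^ 2) := by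
  rw [Complex.norm_def, Complex.normSq_apply]
  have hre : (((x₀ : ℂ) + t * Complex.I) - (l : ℂ)).re = x₀ - l := by simp
  have him : (((x₀ : ℂ) + t * Complex.I) - (l : ℂ)).im = t := by simp
  rw [hre, him]
  ring_nf

open Real in
lemma arctan_antideriv (a : ℝ) (ha : 0 < a) (t : ℝ) :
    HasDerivAt (fun s : ℝ => a⁻¹ * arctan (s / a)) (1 / (t ^ 2 + a ^ 2)) t := by
  have h1 : HasDerivAt (fun s : ℝ => s / a) (1 / a) t := by
    simpa using (hasDerivAt_id t).div_const a
  have h2 := (Real.hasDerivAt_arctan (t / a)).comp t h1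
  have h3 := h2.const_mul a⁻¹
  refine h3.congr_deriv ?_
  field_simp
  ring

lemma inv_integral_bound (a T : ℝ) (ha : 0 < a) (hT : a ≤ T) :
    ∫ t in (-T)..T, 1 / (t ^ 2 + a ^ 2) ≤ 4 / a := by
  have hcont : Continuous fun t : ℝ => 1 / (t ^ 2 + a ^ 2) := by
    refine continuous_const.div (by continuity) fun t => by positivity
  have heval : (∫ t in (-T)..T, 1 / (t ^ 2 + a ^ 2))
      = a⁻¹ * Real.arctan (T / a) - a⁻¹ * Real.arctan (-T / a) := by
    exact intervalIntegral.integral_eq_sub_of_hasDerivAt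
      (fun t _ => arctan_antideriv a ha t) (hcont.intervalIntegrable _ _)
  rw [heval]
  have h1 : Real.arctan (T / a) < Real.pi / 2 := Real.arctan_lt_pi_div_two _
  have h2 : Real.arctan (-T / a) = -Real.arctan (T / a) := by
    rw [neg_div, Real.arctan_neg]
  rw [h2]
  have hpi : Real.pi ≤ 4 := by
    linarith [Real.pi_le_four]
  have : a⁻¹ * Real.arctan (T / a) - a⁻¹ * -Real.arctan (T / a)
      = a⁻¹ * (2 * Real.arctan (T / a)) := by ring
  rw [this]
  have : 2 * Real.arctan (T / a) ≤ 4 := by linarith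
  calc a⁻¹ * (2 * Real.arctan (T / a)) ≤ a⁻¹ * 4 := by
        apply mul_le_mul_of_nonneg_left this (by positivity)
    _ = 4 / a := by rw [div_eq_mul_inv]; ring

lemma specNormC_nonneg {n : ℕ} (M : Matrix (Fin n) (Fin n) ℂ) : 0 ≤ specNormC M :=
  norm_nonneg _

/-- Tail-resolvent bound: with `z = x₀ + it`, `x₀ = λ_p − δ_p/2`, and `|x₀ − λᵢ| ≥ |λ_p|/4`
for `i > r`, the tail `∑_{i>r} uᵢuᵢᵀ/(z − λᵢ)` has spectral norm at most
`1/√(t² + (λ_p/4)²)`, and `∫_{−T}^{T} ‖(∑_{i>r}) E (∑_{j>r})‖ dt ≤ 16‖E‖/|λ_p|`. -/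
theorem tail_resolvent_bound {n : ℕ} (A E : Matrix (Fin n) (Fin n) ℝ)
    (hA : A.IsSymm) (hE : E.IsSymm) (lam : Fin n → ℝ) (u : Fin n → Fin n → ℝ)
    (hmono : ∀ i j : Fin n, i ≤ j → lam j ≤ lam i)
    (hortho : ∀ i j, dotProduct (u i) (u j) = if i = j then (1:ℝ) else 0)
    (hdecomp : A = ∑ i, lam i • Matrix.vecMulVec (u i) (u i))
    (p psucc : Fin n) (hsucc : (psucc : ℕ) = (p : ℕ) + 1)
    (δp x₀ : ℝ) (hδp : δp = lam p - lam psucc) (hδpos : 0 < δp)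
    (hδsmall : δp ≤ |lam p| / 4)
    (r : ℕ) (hr : (p : ℕ) ≤ r)
    (hx₀ : x₀ = lam p - δp / 2)
    (hsep : ∀ i : Fin n, r < (i : ℕ) → |lam p| / 4 ≤ |x₀ - lam i|)
    (T : ℝ) (hT : |lam p| / 4 ≤ T) :
    (∀ t : ℝ,
      specNormC (∑ i ∈ Finset.univ.filter (fun i : Fin n => r < (i : ℕ)),
          (((x₀ + t * Complex.I) - (lam i : ℂ))⁻¹ •
            (Matrix.vecMulVec (u i) (u i)).map Complex.ofReal)) ≤
        1 / Real.sqrt (t ^ 2 + (lam p / 4) ^ 2)) ∧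
    (∫ t in (-T)..T,
        specNormC ((∑ i ∈ Finset.univ.filter (fun i : Fin n => r < (i : ℕ)),
            (((x₀ + t * Complex.I) - (lam i : ℂ))⁻¹ •
              (Matrix.vecMulVec (u i) (u i)).map Complex.ofReal)) *
          (E.map Complex.ofReal) *
          (∑ j ∈ Finset.univ.filter (fun j : Fin n => r < (j : ℕ)),
            (((x₀ + t * Complex.I) - (lam j : ℂ))⁻¹ •
              (Matrix.vecMulVec (u j) (u j)).map Complex.ofReal)))) ≤
      16 * specNormC (E.map Complex.ofReal) / |lam p| := by
  have hlam : 0 < |lam p| := by linarith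
  set a : ℝ := |lam p| / 4 with ha_def
  have ha : 0 < a := by positivity
  have hq : (lam p / 4) ^ 2 = a ^ 2 := by
    rw [ha_def, div_pow, div_pow, sq_abs]
  set s : Finset (Fin n) := Finset.univ.filter (fun i : Fin n => r < (i : ℕ)) with hs_def
  set E' : Matrix (Fin n) (Fin n) ℂ := E.map Complex.ofReal with hE'_def
  -- Part 1
  have part1 : ∀ t : ℝ,
      specNormC (∑ i ∈ s, (((x₀ + t * Complex.I) - (lam i : ℂ))⁻¹ •
          (Matrix.vecMulVec (u i) (u i)).map Complex.ofReal)) ≤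
        1 / Real.sqrt (t ^ 2 + (lam p / 4) ^ 2) := by
    intro t
    have hb : (0:ℝ) ≤ 1 / Real.sqrt (t ^ 2 + (lam p / 4) ^ 2) := by positivity
    refine tail_specNorm_le u hortho s _ _ hb fun i hi => ?_
    have hri : r < (i : ℕ) := (Finset.mem_filter.mp hi).2
    have h4 : a ≤ |x₀ - lam i| := hsep i hri
    rw [norm_inv, complex_norm_shift, hq]
    have hsq : t ^ 2 + a ^ 2 ≤ (x₀ - lam i) ^ 2 + t ^ 2 := by
      have : a ^ 2 ≤ (x₀ - lam i) ^ 2 := by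
        have := pow_le_pow_left₀ ha.le h4 2
        rwa [sq_abs] at this
      linarith
    have hpos : 0 < Real.sqrt (t ^ 2 + a ^ 2) := Real.sqrt_pos.mpr (by positivity)
    rw [one_div]
    exact inv_anti₀ hpos (Real.sqrt_le_sqrt hsq)
  refine ⟨part1, ?_⟩
  -- Part 2
  set S : ℝ → Matrix (Fin n) (Fin n) ℂ := fun t =>
    ∑ i ∈ s, (((x₀ + t * Complex.I) - (lam i : ℂ))⁻¹ •
      (Matrix.vecMulVec (u i) (u i)).map Complex.ofReal) with hS_def
  have hfb : ∀ t : ℝ, specNormC (S t * E' * S t) ≤ specNormC E' * (1 / (t ^ 2 + a ^ 2)) := by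
    intro t
    have hb := part1 t
    have hbnn : (0:ℝ) ≤ 1 / Real.sqrt (t ^ 2 + (lam p / 4) ^ 2) := by positivity
    calc specNormC (S t * E' * S t)
        ≤ specNormC (S t * E') * specNormC (S t) := specNormC_mul_le _ _
      _ ≤ (specNormC (S t) * specNormC E') * specNormC (S t) := by
          gcongr
          · exact specNormC_nonneg _
          · exact specNormC_mul_le _ _
      _ ≤ ((1 / Real.sqrt (t ^ 2 + (lam p / 4) ^ 2)) * specNormC E') *
            (1 / Real.sqrt (t ^ 2 + (lam p / 4) ^ 2)) :=
          mul_le_mul (mul_le_mul hb le_rfl (specNormC_nonneg _) hbnn) hb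
            (specNormC_nonneg _) (mul_nonneg hbnn (specNormC_nonneg _))
      _ = specNormC E' * (1 / Real.sqrt (t ^ 2 + (lam p / 4) ^ 2)) ^ 2 := by ring
      _ = specNormC E' * (1 / (t ^ 2 + a ^ 2)) := by
          rw [hq, one_div, one_div, inv_pow, Real.sq_sqrt (by positivity)]
  have hTT : -T ≤ T := by linarith
  have hgc : Continuous fun t : ℝ => specNormC E' * (1 / (t ^ 2 + a ^ 2)) :=
    continuous_const.mul (continuous_const.div (by continuity) fun t => by positivity)
  have hgint : IntervalIntegrable (fun t : ℝ => specNormC E' * (1 / (t ^ 2 + a ^ 2)))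
      MeasureTheory.volume (-T) T := hgc.intervalIntegrable _ _
  have step1 : (∫ t in (-T)..T, specNormC (S t * E' * S t))
      ≤ ∫ t in (-T)..T, specNormC E' * (1 / (t ^ 2 + a ^ 2)) := by
    rw [intervalIntegral.integral_of_le hTT, intervalIntegral.integral_of_le hTT]
    refine MeasureTheory.integral_mono_of_nonneg ?_ hgint.1 ?_
    · exact Filter.Eventually.of_forall fun t => specNormC_nonneg _
    · exact Filter.Eventually.of_forall hfb
  have step2 : (∫ t in (-T)..T, specNormC E' * (1 / (t ^ 2 + a ^ 2)))
      = specNormC E' * ∫ t in (-T)..T, 1 / (t ^ 2 + a ^ 2) :=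
    intervalIntegral.integral_const_mul _ _
  have step3 : specNormC E' * (∫ t in (-T)..T, 1 / (t ^ 2 + a ^ 2))
      ≤ specNormC E' * (4 / a) :=
    mul_le_mul_of_nonneg_left (inv_integral_bound a T ha hT) (specNormC_nonneg _)
  have final : specNormC E' * (4 / a) = 16 * specNormC E' / |lam p| := by
    rw [ha_def]
    field_simp
    ring
  calc (∫ t in (-T)..T, specNormC (S t * E' * S t))
      ≤ specNormC E' * ∫ t in (-T)..T, 1 / (t ^ 2 + a ^ 2) := by rw [← step2]; exact step1
    _ ≤ specNormC E' * (4 / a) := step3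
    _ = 16 * specNormC E' / |lam p| := final
end

section
/- Let A be a real symmetric matrix with eigenvalues λ_1 ≥ ... ≥ λ_n and E real symmetric. If |λ_i − λ_j| ≥ 4‖E‖ for all i ∈ S, j ∉ S, then there exists a closed rectangular contour Γ in ℂ containing exactly the eigenvalues {λ_i : i ∈ S} of A in its interior, such that every point z ∈ Γ satisfies dist(z, spec(A)) ≥ 2‖E‖; moreover, by Weyl's inequality, every eigenvalue λ̃_i of A + E lies inside Γ if and only if i ∈ S. -/
noncomputable def specNormR {n : ℕ} (M : Matrix (Fin n) (Fin n) ℝ) : ℝ :=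
  ‖Matrix.toEuclideanCLM (𝕜 := ℝ) M‖

/-- Existence of a separating contour: if the eigenvalues of `A` indexed by `S` are at distance
at least `4‖E‖` from those outside `S`, there is a region `U` bounded by finitely many
axis-parallel rectangles (a rectangular contour `Γ = frontier U`) containing exactly the
eigenvalues `λᵢ, i ∈ S` of `A`, whose boundary stays at distance at least `2‖E‖` from the
spectrum of `A`; moreover (by Weyl's inequality `|λ̃ᵢ − λᵢ| ≤ ‖E‖`) an eigenvalue `λ̃ᵢ` of
`A + E` lies in `U` iff `i ∈ S`. -/
theorem exists_separating_contour {n : ℕ} (A E : Matrix (Fin n) (Fin n) ℝ)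
    (hA : A.IsSymm) (hE : E.IsSymm)
    (lam lamt : Fin n → ℝ) (u v : Fin n → Fin n → ℝ)
    (hdist : Function.Injective lam)
    (hortho : ∀ i j, dotProduct (u i) (u j) = if i = j then (1:ℝ) else 0)
    (hdecomp : A = ∑ i, lam i • Matrix.vecMulVec (u i) (u i))
    (hortho' : ∀ i j, dotProduct (v i) (v j) = if i = j then (1:ℝ) else 0)
    (hdecomp' : A + E = ∑ i, lamt i • Matrix.vecMulVec (v i) (v i))
    (hWeyl : ∀ i, |lamt i - lam i| ≤ specNormR E)
    (S : Finset (Fin n))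
    (hgap : ∀ i ∈ S, ∀ j ∉ S, 4 * specNormR E ≤ |lam i - lam j|) :
    ∃ (m : ℕ) (a b c d : Fin m → ℝ),
      (∀ i, ((lam i : ℂ) ∈
          ⋃ k, {z : ℂ | z.re ∈ Set.Ioo (a k) (b k) ∧ z.im ∈ Set.Ioo (c k) (d k)}) ↔ i ∈ S) ∧
      (∀ z ∈ frontier
          (⋃ k, {z : ℂ | z.re ∈ Set.Ioo (a k) (b k) ∧ z.im ∈ Set.Ioo (c k) (d k)}),
        ∀ i, 2 * specNormR E ≤ ‖z - (lam i : ℂ)‖) ∧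
      (∀ i, ((lamt i : ℂ) ∈
          ⋃ k, {z : ℂ | z.re ∈ Set.Ioo (a k) (b k) ∧ z.im ∈ Set.Ioo (c k) (d k)}) ↔ i ∈ S) := by
  classical
  set ε := specNormR E with hεdef
  have hε : 0 ≤ ε := norm_nonneg _
  set g : ℝ := if h : (S ×ˢ Sᶜ).Nonempty then
      (S ×ˢ Sᶜ).inf' h (fun p => |lam p.1 - lam p.2|) else 4*ε + 2 with hgdef
  have hg4 : 4*ε ≤ g := by
    rw [hgdef]; split
    · refine Finset.le_inf' _ _ (fun p hp => ?_)
      simp only [Finset.mem_product, Finset.mem_compl] at hp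
      exact hgap p.1 hp.1 p.2 hp.2
    · linarith
  have hg0 : 0 < g := by
    rw [hgdef]; split
    · rename_i h
      rw [Finset.lt_inf'_iff]
      intro p hp
      simp only [Finset.mem_product, Finset.mem_compl] at hp
      have hne : lam p.1 ≠ lam p.2 := by
        intro hh
        exact hp.2 (hdist hh ▸ hp.1)
      exact abs_pos.mpr (sub_ne_zero.mpr hne)
    · linarith
  have hgpair : ∀ i ∈ S, ∀ j ∉ S, g ≤ |lam i - lam j| := by
    intro i hi j hj
    have hmem : (i, j) ∈ S ×ˢ Sᶜ := by
      simp [Finset.mem_product, hi, hj]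
    rw [hgdef, dif_pos ⟨(i, j), hmem⟩]
    exact Finset.inf'_le _ hmem
  refine ⟨n, fun k => if k ∈ S then lam k - g/2 else 1,
           fun k => if k ∈ S then lam k + g/2 else 0,
           fun k => if k ∈ S then -(g/2) else 1,
           fun k => if k ∈ S then g/2 else 0, ?_, ?_, ?_⟩
  · intro i
    constructor
    · intro hi
      simp only [Set.mem_iUnion, Set.mem_setOf_eq, Complex.ofReal_re, Complex.ofReal_im,
        Set.mem_Ioo] at hi
      obtain ⟨k, hre, him⟩ := hi
      by_contra hiS
      by_cases hk : k ∈ S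
      · simp only [hk, if_true] at hre
        have h1 := hgpair k hk i hiS
        rcases abs_cases (lam k - lam i) with ⟨h2, h3⟩ | ⟨h2, h3⟩ <;> linarith [hre.1, hre.2]
      · simp only [hk, if_false] at hre
        linarith [hre.1, hre.2]
    · intro hi
      refine Set.mem_iUnion.mpr ⟨i, ?_⟩
      simp only [Set.mem_setOf_eq, Complex.ofReal_re, Complex.ofReal_im, Set.mem_Ioo,
        hi, if_true]
      refine ⟨⟨by linarith, by linarith⟩, by linarith, by linarith⟩
  · intro z hz i
    have hUopen : IsOpen (⋃ k : Fin n, {z : ℂ |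
        z.re ∈ Set.Ioo ((fun k => if k ∈ S then lam k - g/2 else 1) k)
          ((fun k => if k ∈ S then lam k + g/2 else 0) k) ∧
        z.im ∈ Set.Ioo ((fun k => if k ∈ S then -(g/2) else 1) k)
          ((fun k => if k ∈ S then g/2 else 0) k)}) := by
      exact isOpen_iUnion fun k =>
        (isOpen_Ioo.preimage Complex.continuous_re).inter
          (isOpen_Ioo.preimage Complex.continuous_im)
    rw [hUopen.frontier_eq] at hz
    obtain ⟨hzc, hznU⟩ := hz
    -- closure is inside union of closed rectangles
    have hzC : z ∈ ⋃ k : Fin n, {z : ℂ |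
        z.re ∈ Set.Icc ((fun k => if k ∈ S then lam k - g/2 else 1) k)
          ((fun k => if k ∈ S then lam k + g/2 else 0) k) ∧
        z.im ∈ Set.Icc ((fun k => if k ∈ S then -(g/2) else 1) k)
          ((fun k => if k ∈ S then g/2 else 0) k)} := by
      refine closure_minimal ?_ ?_ hzc
      · exact Set.iUnion_mono fun k z hz =>
          ⟨Set.Ioo_subset_Icc_self hz.1, Set.Ioo_subset_Icc_self hz.2⟩
      · exact isClosed_iUnion_of_finite fun k =>
          (isClosed_Icc.preimage Complex.continuous_re).inter
            (isClosed_Icc.preimage Complex.continuous_im)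
    simp only [Set.mem_iUnion, Set.mem_setOf_eq, Set.mem_Icc] at hzC
    obtain ⟨k, hre, him⟩ := hzC
    by_cases hk : k ∈ S
    swap
    · simp only [hk, if_false] at hre
      linarith [hre.1, hre.2]
    simp only [hk, if_true] at hre him
    have habsre : |(z - (lam i : ℂ)).re| ≤ ‖z - (lam i : ℂ)‖ :=
      Complex.abs_re_le_norm _
    have habsim : |(z - (lam i : ℂ)).im| ≤ ‖z - (lam i : ℂ)‖ :=
      Complex.abs_im_le_norm _
    have hresub : (z - (lam i : ℂ)).re = z.re - lam i := by simp
    have himsub : (z - (lam i : ℂ)).im = z.im := by simp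
    rw [hresub] at habsre
    rw [himsub] at habsim
    by_cases hi : i ∈ S
    · have hzni : z ∉ {w : ℂ | w.re ∈ Set.Ioo (lam i - g/2) (lam i + g/2) ∧
          w.im ∈ Set.Ioo (-(g/2)) (g/2)} := by
        intro hmem
        exact hznU (Set.mem_iUnion.mpr ⟨i, by
          simp only [Set.mem_setOf_eq, hi, if_true]; exact hmem⟩)
      simp only [Set.mem_setOf_eq, Set.mem_Ioo, not_and_or, not_and, not_lt] at hzni
      have key : g/2 ≤ |z.re - lam i| ∨ g/2 ≤ |z.im| := by
        rcases hzni with h | h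
        · left
          rcases h with h | h <;>
            rcases abs_cases (z.re - lam i) with ⟨h1, h2⟩ | ⟨h1, h2⟩ <;> linarith
        · right
          rcases h with h | h <;>
            rcases abs_cases z.im with ⟨h1, h2⟩ | ⟨h1, h2⟩ <;> linarith
      rcases key with h | h <;> linarith
    · have h1 := hgpair k hk i hi
      have h2 : g/2 ≤ |z.re - lam i| := by
        rcases abs_cases (lam k - lam i) with ⟨h3, h4⟩ | ⟨h3, h4⟩ <;>
          rcases abs_cases (z.re - lam i) with ⟨h5, h6⟩ | ⟨h5, h6⟩ <;>
            linarith [hre.1, hre.2]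
      linarith
  · intro i
    have hW := hWeyl i
    constructor
    · intro hi
      simp only [Set.mem_iUnion, Set.mem_setOf_eq, Complex.ofReal_re, Complex.ofReal_im,
        Set.mem_Ioo] at hi
      obtain ⟨k, hre, him⟩ := hi
      by_contra hiS
      by_cases hk : k ∈ S
      · simp only [hk, if_true] at hre
        have h1 := hgpair k hk i hiS
        rcases abs_cases (lam k - lam i) with ⟨h2, h3⟩ | ⟨h2, h3⟩ <;>
          rcases abs_cases (lamt i - lam i) with ⟨h4, h5⟩ | ⟨h4, h5⟩ <;>
            linarith [hre.1, hre.2]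
      · simp only [hk, if_false] at hre
        linarith [hre.1, hre.2]
    · intro hi
      refine Set.mem_iUnion.mpr ⟨i, ?_⟩
      simp only [Set.mem_setOf_eq, Complex.ofReal_re, Complex.ofReal_im, Set.mem_Ioo,
        hi, if_true]
      rcases abs_cases (lamt i - lam i) with ⟨h4, h5⟩ | ⟨h4, h5⟩ <;>
        exact ⟨⟨by linarith, by linarith⟩, by linarith, by linarith⟩
end
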